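/- Suppose ℱ = {D_1,…,D_M} is a finite set of probability distributions on a measurable space 𝒳 and D is a distribution with ‖D − D''‖_{TV} ≤ δ for some D'' ∈ ℱ. Given, for each pair i ≠ j, an estimate p_{ij} with |p_{ij} − Pr_{x←D}[x ∈ A_{ij}]| ≤ δ/2, where A_{ij} is a set achieving the total variation distance between D_i and D_j, the algorithm that outputs the first D_i satisfying |p_{ij} − Pr_{x←D_i}[x ∈ A_{ij}]| ≤ 3δ/2 for all j returns a distribution D* with ‖D − D*‖_{TV} ≤ 4δ. -/
import Mathlib


open MeasureTheory

/-- Total variation distance between two measures, as the supremum over measurable sets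
of the difference of their masses. -/
noncomputable def tvDist {𝒳 : Type*} [MeasurableSpace 𝒳] (P Q : Measure 𝒳) : ℝ :=
  ⨆ s : {s : Set 𝒳 // MeasurableSet s}, ((P s).toReal - (Q s).toReal)

lemma tv_bddAbove {𝒳 : Type*} [MeasurableSpace 𝒳] (P Q : Measure 𝒳)
    [IsProbabilityMeasure P] :
    BddAbove (Set.range fun s : {s : Set 𝒳 // MeasurableSet s} =>
      ((P s).toReal - (Q s).toReal)) := by
  refine ⟨1, ?_⟩
  rintro x ⟨s, rfl⟩
  have h1 : (P s).toReal ≤ 1 := by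
    have := prob_le_one (μ := P) (s := s)
    calc (P (s : Set 𝒳)).toReal ≤ (1 : ENNReal).toReal :=
          ENNReal.toReal_mono (by simp) this
      _ = 1 := by simp
  have h2 : 0 ≤ (Q s).toReal := ENNReal.toReal_nonneg
  simp only
  linarith

lemma le_tv {𝒳 : Type*} [MeasurableSpace 𝒳] (P Q : Measure 𝒳)
    [IsProbabilityMeasure P] {s : Set 𝒳} (hs : MeasurableSet s) :
    (P s).toReal - (Q s).toReal ≤ tvDist P Q :=
  le_ciSup (tv_bddAbove P Q) ⟨s, hs⟩

lemma prob_toReal_add_compl {𝒳 : Type*} [MeasurableSpace 𝒳] (P : Measure 𝒳)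
    [IsProbabilityMeasure P] {s : Set 𝒳} (hs : MeasurableSet s) :
    (P s).toReal + (P sᶜ).toReal = 1 := by
  have h := measure_add_measure_compl (μ := P) hs
  have := congrArg ENNReal.toReal h
  rw [ENNReal.toReal_add (measure_ne_top P s) (measure_ne_top P sᶜ)] at this
  simpa using this

lemma tv_symm_le {𝒳 : Type*} [MeasurableSpace 𝒳] (P Q : Measure 𝒳)
    [IsProbabilityMeasure P] [IsProbabilityMeasure Q] :
    tvDist P Q ≤ tvDist Q P := by
  apply ciSup_le
  rintro ⟨s, hs⟩
  have hP := prob_toReal_add_compl P hs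
  have hQ := prob_toReal_add_compl Q hs
  have := le_tv Q P hs.compl
  simp only
  linarith

lemma tv_triangle {𝒳 : Type*} [MeasurableSpace 𝒳] (P Q R : Measure 𝒳)
    [IsProbabilityMeasure P] [IsProbabilityMeasure Q] :
    tvDist P R ≤ tvDist P Q + tvDist Q R := by
  apply ciSup_le
  rintro ⟨s, hs⟩
  have h1 := le_tv P Q hs
  have h2 := le_tv Q R hs
  simp only
  linarith

/-- Tournament argument: if `D` is within TV distance `δ` of some member of the finite
family `D'`, and we are given estimates `p i j` of `Pr_D[A i j]` accurate to `δ/2`,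
where `A i j` achieves the TV distance between `D' i` and `D' j`, then some index passes
the test `∀ j, |p i j - Pr_{D' i}[A i j]| ≤ 3δ/2`, and every index passing the test
yields a distribution within TV distance `4δ` of `D`. -/
theorem stmt_13 {𝒳 : Type*} [MeasurableSpace 𝒳] (M : ℕ)
    (D' : Fin M → Measure 𝒳) [∀ i, IsProbabilityMeasure (D' i)]
    (D : Measure 𝒳) [IsProbabilityMeasure D]
    (δ : ℝ) (hδ : 0 < δ)
    (i₀ : Fin M) (h₀ : tvDist D (D' i₀) ≤ δ)
    (A : Fin M → Fin M → Set 𝒳) (hAm : ∀ i j, MeasurableSet (A i j))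
    (hA : ∀ i j, ((D' i) (A i j)).toReal - ((D' j) (A i j)).toReal = tvDist (D' i) (D' j))
    (p : Fin M → Fin M → ℝ)
    (hp : ∀ i j, |p i j - (D (A i j)).toReal| ≤ δ / 2) :
    (∃ i, ∀ j, |p i j - ((D' i) (A i j)).toReal| ≤ 3 * δ / 2) ∧
      ∀ i, (∀ j, |p i j - ((D' i) (A i j)).toReal| ≤ 3 * δ / 2) →
        tvDist D (D' i) ≤ 4 * δ := by
  -- |D s - D' i₀ s| ≤ δ for measurable s
  have habs : ∀ {s : Set 𝒳}, MeasurableSet s →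
      |(D s).toReal - ((D' i₀) s).toReal| ≤ δ := by
    intro s hs
    have h1 : (D s).toReal - ((D' i₀) s).toReal ≤ δ := (le_tv D (D' i₀) hs).trans h₀
    have h2 : ((D' i₀) s).toReal - (D s).toReal ≤ δ := by
      have hD := prob_toReal_add_compl D hs
      have hD' := prob_toReal_add_compl (D' i₀) hs
      have := (le_tv D (D' i₀) hs.compl).trans h₀
      linarith
    exact abs_le.mpr ⟨by linarith, h1⟩
  constructor
  · refine ⟨i₀, fun j => ?_⟩
    have h1 := hp i₀ j
    have h2 := habs (hAm i₀ j)
    calc |p i₀ j - ((D' i₀) (A i₀ j)).toReal|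
        ≤ |p i₀ j - (D (A i₀ j)).toReal| + |(D (A i₀ j)).toReal - ((D' i₀) (A i₀ j)).toReal| :=
          abs_sub_le _ _ _
      _ ≤ 3 * δ / 2 := by linarith
  · intro i hi
    -- tvDist (D' i) (D' i₀) ≤ 3δ
    have key : tvDist (D' i) (D' i₀) ≤ 3 * δ := by
      rw [← hA i i₀]
      have h1 := abs_le.mp (hi i₀)
      have h2 := abs_le.mp (hp i i₀)
      have h3 := abs_le.mp (habs (hAm i i₀))
      linarith
    have htri := tv_triangle D (D' i₀) (D' i)
    have hsymm := tv_symm_le (D' i₀) (D' i)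
    have hsymm2 := tv_symm_le (D' i) (D' i₀)
    linarith
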